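/- Let a1 ≤ a2 and b1 ≤ b2 be nonnegative reals and tij = ai + bj. Then ∫_0^t c(τ)dτ ≥ 0 for all t ≥ 0 and ∫_t^u c(τ)dτ ≤ 0 for all 0 ≤ t and all u ≥ t22, where c(t) = h(t−t11) − h(t−t12) − h(t−t21) + h(t−t22). Moreover ∫_0^u c(τ)dτ = 0 for u ≥ t22. -/

import Mathlib

noncomputable def heaviside (x : ℝ) : ℝ := if 0 ≤ x then 1 else 0

lemma heaviside_eq_indicator (s : ℝ) :
    (fun τ => heaviside (τ - s)) = Set.indicator (Set.Ici s) (fun _ => (1:ℝ)) := by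
  funext τ
  simp [heaviside, Set.indicator, sub_nonneg, Set.mem_Ici]

lemma heaviside_intervalIntegrable (s x y : ℝ) :
    IntervalIntegrable (fun τ => heaviside (τ - s)) MeasureTheory.volume x y := by
  rw [heaviside_eq_indicator]
  rw [intervalIntegrable_iff]
  exact ((MeasureTheory.integrableOn_const_iff (C := (1:ℝ))).mpr (Or.inr measure_Ioc_lt_top)).indicator
    measurableSet_Ici

lemma integral_heaviside (s t : ℝ) (hs : 0 ≤ s) (ht : 0 ≤ t) :
    ∫ τ in (0:ℝ)..t, heaviside (τ - s) = max (t - s) 0 := by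
  rw [intervalIntegral.integral_of_le ht, heaviside_eq_indicator,
    MeasureTheory.setIntegral_indicator measurableSet_Ici,
    MeasureTheory.setIntegral_const]
  have hvol : MeasureTheory.volume (Set.Ioc 0 t ∩ Set.Ici s) = ENNReal.ofReal (t - s) := by
    apply le_antisymm
    · calc MeasureTheory.volume (Set.Ioc 0 t ∩ Set.Ici s)
          ≤ MeasureTheory.volume (Set.Icc s t) := by
            apply MeasureTheory.measure_mono
            rintro x ⟨⟨_, hx2⟩, hx3⟩
            exact ⟨hx3, hx2⟩
      _ = ENNReal.ofReal (t - s) := Real.volume_Icc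
    · calc ENNReal.ofReal (t - s) = MeasureTheory.volume (Set.Ioc s t) := Real.volume_Ioc.symm
      _ ≤ MeasureTheory.volume (Set.Ioc 0 t ∩ Set.Ici s) := by
            apply MeasureTheory.measure_mono
            rintro x ⟨hx1, hx2⟩
            exact ⟨⟨lt_of_le_of_lt hs hx1, hx2⟩, le_of_lt hx1⟩
  rw [MeasureTheory.measureReal_def, hvol]
  rcases le_total (t - s) 0 with h | h
  · simp [ENNReal.ofReal_eq_zero.mpr h, max_eq_right h]
  · simp [ENNReal.toReal_ofReal h, max_eq_left h]

lemma integral_c (a1 a2 b1 b2 : ℝ) (ha0 : 0 ≤ a1) (hb0 : 0 ≤ b1)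
    (ha : a1 ≤ a2) (hb : b1 ≤ b2)
    (c : ℝ → ℝ)
    (hc : ∀ t, c t = heaviside (t - (a1 + b1)) - heaviside (t - (a1 + b2))
        - heaviside (t - (a2 + b1)) + heaviside (t - (a2 + b2)))
    (t : ℝ) (ht : 0 ≤ t) :
    ∫ τ in (0:ℝ)..t, c τ =
      max (t - (a1 + b1)) 0 - max (t - (a1 + b2)) 0
        - max (t - (a2 + b1)) 0 + max (t - (a2 + b2)) 0 := by
  have hce : c = fun τ => heaviside (τ - (a1 + b1)) - heaviside (τ - (a1 + b2))
        - heaviside (τ - (a2 + b1)) + heaviside (τ - (a2 + b2)) := funext hc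
  rw [hce]
  have h11 := heaviside_intervalIntegrable (a1 + b1) 0 t
  have h12 := heaviside_intervalIntegrable (a1 + b2) 0 t
  have h21 := heaviside_intervalIntegrable (a2 + b1) 0 t
  have h22 := heaviside_intervalIntegrable (a2 + b2) 0 t
  rw [intervalIntegral.integral_add ((h11.sub h12).sub h21) h22,
    intervalIntegral.integral_sub (h11.sub h12) h21,
    intervalIntegral.integral_sub h11 h12,
    integral_heaviside _ _ (by linarith) ht,
    integral_heaviside _ _ (by linarith) ht,
    integral_heaviside _ _ (by linarith) ht,
    integral_heaviside _ _ (by linarith) ht]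

lemma c_intervalIntegrable (a1 a2 b1 b2 : ℝ)
    (c : ℝ → ℝ)
    (hc : ∀ t, c t = heaviside (t - (a1 + b1)) - heaviside (t - (a1 + b2))
        - heaviside (t - (a2 + b1)) + heaviside (t - (a2 + b2)))
    (x y : ℝ) : IntervalIntegrable c MeasureTheory.volume x y := by
  have hce : c = fun τ => heaviside (τ - (a1 + b1)) - heaviside (τ - (a1 + b2))
        - heaviside (τ - (a2 + b1)) + heaviside (τ - (a2 + b2)) := funext hc
  rw [hce]
  exact (((heaviside_intervalIntegrable _ x y).sub
    (heaviside_intervalIntegrable _ x y)).sub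
    (heaviside_intervalIntegrable _ x y)).add (heaviside_intervalIntegrable _ x y)

theorem stmt8 (a1 a2 b1 b2 : ℝ) (ha0 : 0 ≤ a1) (hb0 : 0 ≤ b1)
    (ha : a1 ≤ a2) (hb : b1 ≤ b2)
    (c : ℝ → ℝ)
    (hc : ∀ t, c t = heaviside (t - (a1 + b1)) - heaviside (t - (a1 + b2))
        - heaviside (t - (a2 + b1)) + heaviside (t - (a2 + b2))) :
    (∀ t, 0 ≤ t → 0 ≤ ∫ τ in (0:ℝ)..t, c τ) ∧
    (∀ t, 0 ≤ t → ∀ u, a2 + b2 ≤ u → (∫ τ in t..u, c τ) ≤ 0) ∧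
    (∀ u, a2 + b2 ≤ u → (∫ τ in (0:ℝ)..u, c τ) = 0) := by
  have key1 : ∀ t, 0 ≤ t → 0 ≤ ∫ τ in (0:ℝ)..t, c τ := by
    intro t ht
    rw [integral_c a1 a2 b1 b2 ha0 hb0 ha hb c hc t ht]
    simp only [max_def]
    split_ifs <;> linarith
  have key3 : ∀ u, a2 + b2 ≤ u → (∫ τ in (0:ℝ)..u, c τ) = 0 := by
    intro u hu
    rw [integral_c a1 a2 b1 b2 ha0 hb0 ha hb c hc u (by linarith)]
    have h1 : max (u - (a1 + b1)) 0 = u - (a1 + b1) := max_eq_left (by linarith)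
    have h2 : max (u - (a1 + b2)) 0 = u - (a1 + b2) := max_eq_left (by linarith)
    have h3 : max (u - (a2 + b1)) 0 = u - (a2 + b1) := max_eq_left (by linarith)
    have h4 : max (u - (a2 + b2)) 0 = u - (a2 + b2) := max_eq_left (by linarith)
    rw [h1, h2, h3, h4]; ring
  refine ⟨key1, ?_, key3⟩
  intro t ht u hu
  have hsplit : (∫ τ in (0:ℝ)..u, c τ) - (∫ τ in (0:ℝ)..t, c τ) = ∫ τ in t..u, c τ :=
    intervalIntegral.integral_interval_sub_left
      (c_intervalIntegrable a1 a2 b1 b2 c hc 0 u)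
      (c_intervalIntegrable a1 a2 b1 b2 c hc 0 t)
  have := key1 t ht
  have := key3 u hu
  linarith
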